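/- Heine's transformation: for |q| < 1, |z| < 1 and |bz| < 1, ₂φ₁(a, b; 0; q, z) = (bz;q)_∞ / (z;q)_∞ · ₁φ₁(b; bz; q, az). -/

import Mathlib

open scoped BigOperators

/-- The finite q-Pochhammer symbol `(a;q)_n = ∏_{i=0}^{n-1}(1 - a q^i)`. -/
noncomputable def qPochN (a q : ℂ) (n : ℕ) : ℂ := ∏ i ∈ Finset.range n, (1 - a * q ^ i)

/-- The infinite q-Pochhammer symbol `(a;q)_∞ = ∏_{i=0}^∞ (1 - a q^i)`. -/
noncomputable def qPochInf (a q : ℂ) : ℂ := ∏' i : ℕ, (1 - a * q ^ i)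

/-- The basic hypergeometric series `₂φ₁(a,b;c;q,z)` (with `(0;q)_n = 1` when `c = 0`). -/
noncomputable def phi21 (a b c q z : ℂ) : ℂ :=
  ∑' n : ℕ, qPochN a q n * qPochN b q n / (qPochN c q n * qPochN q q n) * z ^ n

/-- The basic hypergeometric series `₁φ₁(a;c;q,x)`. -/
noncomputable def phi11 (a c q x : ℂ) : ℂ :=
  ∑' n : ℕ, qPochN a q n / (qPochN c q n * qPochN q q n) * (-1) ^ n * q ^ (n * (n - 1) / 2) * x ^ n

namespace HeineAux

open Finset Filter Topology

lemma qPochN_zero (a q : ℂ) : qPochN a q 0 = 1 := by simp [qPochN]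

lemma qPochN_succ (a q : ℂ) (n : ℕ) :
    qPochN a q (n + 1) = qPochN a q n * (1 - a * q ^ n) := Finset.prod_range_succ _ n

lemma qPochN_zero_left (q : ℂ) (n : ℕ) : qPochN 0 q n = 1 := by simp [qPochN]

lemma qPochN_add (a q : ℂ) (n m : ℕ) :
    qPochN a q (n + m) = qPochN a q n * qPochN (a * q ^ n) q m := by
  rw [qPochN, qPochN, qPochN, Finset.prod_range_add]
  congr 1
  refine Finset.prod_congr rfl fun i _ => ?_
  rw [pow_add, mul_assoc]

lemma geom_partial_le {r : ℝ} (h0 : 0 ≤ r) (h1 : r < 1) (n : ℕ) :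
    ∑ i ∈ Finset.range n, r ^ i ≤ (1 - r)⁻¹ := by
  have := Summable.sum_le_tsum (Finset.range n) (fun i _ => by positivity)
    (summable_geometric_of_lt_one h0 h1)
  rwa [tsum_geometric_of_lt_one h0 h1] at this

lemma qPochN_norm_le (a q : ℂ) (hq : ‖q‖ < 1) (n : ℕ) :
    ‖qPochN a q n‖ ≤ Real.exp (‖a‖ * (1 - ‖q‖)⁻¹) := by
  have h1 : ‖qPochN a q n‖ ≤ ∏ i ∈ Finset.range n, (1 + ‖a‖ * ‖q‖ ^ i) := by
    refine (Finset.norm_prod_le _ _).trans (Finset.prod_le_prod (fun i _ => norm_nonneg _)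
      (fun i _ => ?_))
    calc ‖1 - a * q ^ i‖ ≤ ‖(1 : ℂ)‖ + ‖a * q ^ i‖ := norm_sub_le _ _
      _ = 1 + ‖a‖ * ‖q‖ ^ i := by simp [norm_mul, norm_pow]
  refine h1.trans ?_
  have h2 : ∏ i ∈ Finset.range n, (1 + ‖a‖ * ‖q‖ ^ i)
      ≤ ∏ i ∈ Finset.range n, Real.exp (‖a‖ * ‖q‖ ^ i) := by
    refine Finset.prod_le_prod (fun i _ => by positivity) (fun i _ => ?_)
    have := Real.add_one_le_exp (‖a‖ * ‖q‖ ^ i)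
    linarith
  refine h2.trans ?_
  rw [← Real.exp_sum]
  apply Real.exp_le_exp.2
  rw [← Finset.mul_sum]
  have := geom_partial_le (norm_nonneg q) hq n
  have ha := norm_nonneg a
  nlinarith [this]

lemma one_sub_ge_exp {t r : ℝ} (ht : 0 ≤ t) (htr : t ≤ r) (hr : r < 1) :
    Real.exp (-(t * (1 - r)⁻¹)) ≤ 1 - t := by
  have h1t : 0 < 1 - t := by linarith
  have h1r : 0 < 1 - r := by linarith
  rw [← Real.exp_log h1t, Real.exp_le_exp]
  have hlog := Real.log_le_sub_one_of_pos (x := (1 - t)⁻¹) (by positivity)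
  rw [Real.log_inv] at hlog
  have h2 : (1 - t)⁻¹ - 1 = t / (1 - t) := by field_simp; ring
  have h3 : t / (1 - t) ≤ t / (1 - r) := by gcongr
  rw [h2] at hlog
  have : t / (1 - r) = t * (1 - r)⁻¹ := div_eq_mul_inv _ _
  linarith [hlog, h3, this ▸ h3]

lemma qPochN_norm_ge (x q : ℂ) (hx : ‖x‖ < 1) (hq : ‖q‖ < 1) (n : ℕ) :
    Real.exp (-(‖x‖ * (1 - ‖q‖)⁻¹ * (1 - ‖x‖)⁻¹)) ≤ ‖qPochN x q n‖ := by
  have hx0 := norm_nonneg x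
  have hq0 := norm_nonneg q
  have h1 : ∏ i ∈ Finset.range n, Real.exp (-(‖x‖ * ‖q‖ ^ i * (1 - ‖x‖)⁻¹))
      ≤ ‖qPochN x q n‖ := by
    rw [qPochN, norm_prod]
    refine Finset.prod_le_prod (fun i _ => (Real.exp_pos _).le) (fun i _ => ?_)
    have hpow : ‖q‖ ^ i ≤ 1 := pow_le_one₀ hq0 hq.le
    have ht : ‖x‖ * ‖q‖ ^ i ≤ ‖x‖ := by nlinarith
    have ht0 : 0 ≤ ‖x‖ * ‖q‖ ^ i := by positivity
    have h2 := one_sub_ge_exp ht0 ht hx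
    have h3 : 1 - ‖x * q ^ i‖ ≤ ‖1 - x * q ^ i‖ := by
      have := norm_sub_norm_le (1 : ℂ) (x * q ^ i)
      simpa using this
    rw [norm_mul, norm_pow] at h3
    linarith
  refine le_trans ?_ h1
  rw [← Real.exp_sum, Real.exp_le_exp]
  have hsum : ∑ i ∈ Finset.range n, ‖x‖ * ‖q‖ ^ i * (1 - ‖x‖)⁻¹
      ≤ ‖x‖ * (1 - ‖q‖)⁻¹ * (1 - ‖x‖)⁻¹ := by
    rw [← Finset.sum_mul, ← Finset.mul_sum]
    have := geom_partial_le hq0 hq n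
    have hinv : (0:ℝ) ≤ (1 - ‖x‖)⁻¹ := by
      have : (0:ℝ) < 1 - ‖x‖ := by linarith
      positivity
    gcongr
  rw [Finset.sum_neg_distrib]
  linarith

lemma qPochN_ne_zero {x q : ℂ} (hx : ‖x‖ < 1) (hq : ‖q‖ < 1) (n : ℕ) :
    qPochN x q n ≠ 0 := by
  have h := qPochN_norm_ge x q hx hq n
  have := Real.exp_pos (-(‖x‖ * (1 - ‖q‖)⁻¹ * (1 - ‖x‖)⁻¹))
  intro h0
  rw [h0, norm_zero] at h
  linarith

lemma one_sub_ne_zero {x q : ℂ} (hx : ‖x‖ < 1) (hq : ‖q‖ < 1) (i : ℕ) :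
    1 - x * q ^ i ≠ 0 := by
  intro h
  have h1 : x * q ^ i = 1 := by linear_combination -h
  have : ‖x * q ^ i‖ < 1 := by
    rw [norm_mul, norm_pow]
    have hpow : ‖q‖ ^ i ≤ 1 := pow_le_one₀ (norm_nonneg q) hq.le
    have := norm_nonneg x
    nlinarith
  rw [h1, norm_one] at this
  linarith

lemma summable_log {x q : ℂ} (hx : ‖x‖ < 1) (hq : ‖q‖ < 1) :
    Summable fun i : ℕ => Complex.log (1 - x * q ^ i) := by
  obtain ⟨K, hK⟩ : ∃ K : ℕ, ‖x‖ * ‖q‖ ^ K ≤ 1 / 2 := by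
    rcases lt_or_ge ‖x‖ (1/2) with h | h
    · exact ⟨0, by rw [pow_zero, mul_one]; linarith⟩
    · have : Tendsto (fun K : ℕ => ‖x‖ * ‖q‖ ^ K) atTop (𝓝 (‖x‖ * 0)) :=
        (tendsto_pow_atTop_nhds_zero_of_lt_one (norm_nonneg q) hq).const_mul _
      rw [mul_zero] at this
      have := this.eventually_le_const (by norm_num : (0:ℝ) < 1/2)
      exact this.exists
  rw [← summable_nat_add_iff K]
  have hbound : ∀ i : ℕ, ‖Complex.log (1 - x * q ^ (i + K))‖ ≤ 3/2 * (1/2 * ‖q‖ ^ i) := by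
    intro i
    have hkey : ‖-(x * q ^ (i + K))‖ ≤ 1/2 * ‖q‖ ^ i := by
      rw [norm_neg, norm_mul, norm_pow, pow_add]
      calc ‖x‖ * (‖q‖ ^ i * ‖q‖ ^ K) = (‖x‖ * ‖q‖ ^ K) * ‖q‖ ^ i := by ring
        _ ≤ 1/2 * ‖q‖ ^ i := by
            have : (0:ℝ) ≤ ‖q‖ ^ i := by positivity
            nlinarith
    have h12 : ‖-(x * q ^ (i + K))‖ ≤ 1/2 := by
      refine hkey.trans ?_
      have : ‖q‖ ^ i ≤ 1 := pow_le_one₀ (norm_nonneg q) hq.le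
      linarith
    have := Complex.norm_log_one_add_half_le_self h12
    rw [show (1 : ℂ) + -(x * q ^ (i + K)) = 1 - x * q ^ (i + K) by ring] at this
    refine this.trans ?_
    nlinarith [hkey]
  refine Summable.of_norm_bounded ?_ hbound
  exact ((summable_geometric_of_lt_one (norm_nonneg q) hq).mul_left _).mul_left _

lemma multipliable_qPoch {x q : ℂ} (hx : ‖x‖ < 1) (hq : ‖q‖ < 1) :
    Multipliable fun i : ℕ => 1 - x * q ^ i := by
  exact Complex.multipliable_of_summable_log (summable_log hx hq)

lemma qPochInf_ne_zero {x q : ℂ} (hx : ‖x‖ < 1) (hq : ‖q‖ < 1) : qPochInf x q ≠ 0 := by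
  have := Complex.cexp_tsum_eq_tprod (f := fun i => 1 - x * q ^ i)
    (fun i => one_sub_ne_zero hx hq i) (summable_log hx hq)
  rw [qPochInf, ← this]
  exact Complex.exp_ne_zero _

lemma norm_mul_pow_le {x q : ℂ} (hx : ‖x‖ < 1) (hq : ‖q‖ < 1) (n : ℕ) : ‖x * q ^ n‖ < 1 := by
  rw [norm_mul, norm_pow]
  have hpow : ‖q‖ ^ n ≤ 1 := pow_le_one₀ (norm_nonneg q) hq.le
  nlinarith [norm_nonneg x]

lemma qPochInf_split {x q : ℂ} (hx : ‖x‖ < 1) (hq : ‖q‖ < 1) (n : ℕ) :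
    qPochInf x q = qPochN x q n * qPochInf (x * q ^ n) q := by
  have hmul : Multipliable fun i : ℕ => 1 - x * q ^ n * q ^ i :=
    multipliable_qPoch (norm_mul_pow_le hx hq n) hq
  have hmul' : Multipliable fun i : ℕ => 1 - x * q ^ (i + n) := by
    refine hmul.congr fun i => ?_
    show 1 - x * q ^ n * q ^ i = 1 - x * q ^ (i + n)
    rw [pow_add]; ring
  have h0 := Multipliable.prod_mul_tprod_nat_mul' (f := fun i : ℕ => 1 - x * q ^ i) (k := n) hmul'
  have h2 : qPochN x q n * (∏' i : ℕ, (1 - x * q ^ n * q ^ i)) = qPochInf x q := by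
    rw [qPochInf, ← h0, qPochN]
    congr 1
    refine tprod_congr fun i => ?_
    show 1 - x * q ^ n * q ^ i = 1 - x * q ^ (i + n)
    rw [pow_add]; ring
  rw [← h2]
  rfl

lemma qPochN_tendsto {x q : ℂ} (hx : ‖x‖ < 1) (hq : ‖q‖ < 1) :
    Tendsto (fun n => qPochN x q n) atTop (𝓝 (qPochInf x q)) := by
  have := Multipliable.tendsto_prod_tprod_nat (multipliable_qPoch hx hq)
  simpa [qPochN, qPochInf] using this

lemma Tsucc (n : ℕ) : (n + 1) * n / 2 = n * (n - 1) / 2 + n := by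
  cases n with
  | zero => simp
  | succ k =>
    rw [Nat.add_sub_cancel]
    rw [show (k + 1 + 1) * (k + 1) = (k + 1) * k + 2 * (k + 1) by ring]
    rw [Nat.add_mul_div_left _ _ (by norm_num : (0:ℕ) < 2)]

/-- Gaussian binomial coefficient times `q` power. -/
noncomputable def cG (q : ℂ) (N n : ℕ) : ℂ :=
  q ^ (n * (n - 1) / 2) * qPochN q q N / (qPochN q q n * qPochN q q (N - n))

lemma cG_zero {q : ℂ} (hq : ‖q‖ < 1) (N : ℕ) : cG q N 0 = 1 := by
  have h := qPochN_ne_zero hq hq N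
  simp only [cG, Nat.sub_zero, qPochN_zero, Nat.zero_mul, Nat.zero_div, pow_zero, one_mul]
  exact div_self h

lemma pascal {q : ℂ} (hq : ‖q‖ < 1) (i j : ℕ) :
    cG q (i + j + 2) (i + 1) = cG q (i + j + 1) (i + 1) + q ^ (i + j + 1) * cG q (i + j + 1) i := by
  have hi := qPochN_ne_zero hq hq i
  have hj := qPochN_ne_zero hq hq j
  have hij := qPochN_ne_zero hq hq (i + j + 1)
  have h1i := one_sub_ne_zero hq hq i
  have h1j := one_sub_ne_zero hq hq j
  unfold cG
  rw [Nat.add_sub_cancel,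
      show i + j + 2 - (i + 1) = j + 1 from by omega,
      show i + j + 1 - (i + 1) = j from by omega,
      show i + j + 1 - i = j + 1 from by omega,
      Tsucc i,
      show i + j + 2 = (i + j + 1) + 1 from rfl,
      qPochN_succ q q (i + j + 1), qPochN_succ q q i, qPochN_succ q q j]
  field_simp
  ring

lemma gauss {q : ℂ} (hq : ‖q‖ < 1) (a : ℂ) (N : ℕ) :
    qPochN a q N = ∑ n ∈ Finset.range (N + 1), cG q N n * (-a) ^ n := by
  induction N with
  | zero => simp [qPochN_zero, cG_zero hq]
  | succ N ih =>
    have hmid : ∀ i ∈ Finset.range N, cG q (N + 1) (i + 1) = cG q N (i + 1) + q ^ N * cG q N i := by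
      intro i hi
      have hi' : i < N := Finset.mem_range.1 hi
      obtain ⟨j, rfl⟩ : ∃ j, N = i + j + 1 := ⟨N - i - 1, by omega⟩
      exact pascal hq i j
    have htop : cG q (N + 1) (N + 1) = q ^ N * cG q N N := by
      have hP1 := qPochN_ne_zero hq hq (N + 1)
      have hPN := qPochN_ne_zero hq hq N
      unfold cG
      rw [Nat.sub_self, Nat.sub_self, qPochN_zero, Nat.add_sub_cancel, Tsucc, pow_add]
      field_simp
    have e1 : qPochN a q (N + 1)
        = (∑ n ∈ Finset.range (N + 1), cG q N n * (-a) ^ n)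
          + (-a) * q ^ N * (∑ n ∈ Finset.range (N + 1), cG q N n * (-a) ^ n) := by
      rw [qPochN_succ, ih]; ring
    have e2 : (-a) * q ^ N * (∑ n ∈ Finset.range (N + 1), cG q N n * (-a) ^ n)
        = ∑ n ∈ Finset.range (N + 1), q ^ N * cG q N n * (-a) ^ (n + 1) := by
      rw [Finset.mul_sum]
      exact Finset.sum_congr rfl fun n _ => by rw [pow_succ]; ring
    have e3 : ∑ n ∈ Finset.range (N + 1), cG q N n * (-a) ^ n
        = (∑ n ∈ Finset.range N, cG q N (n + 1) * (-a) ^ (n + 1)) + 1 := by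
      rw [Finset.sum_range_succ']
      simp [cG_zero hq]
    have e4 : ∑ n ∈ Finset.range (N + 1), q ^ N * cG q N n * (-a) ^ (n + 1)
        = (∑ n ∈ Finset.range N, q ^ N * cG q N n * (-a) ^ (n + 1))
          + q ^ N * cG q N N * (-a) ^ (N + 1) := Finset.sum_range_succ _ N
    have e5 : ∑ n ∈ Finset.range (N + 2), cG q (N + 1) n * (-a) ^ n
        = (∑ n ∈ Finset.range (N + 1), cG q (N + 1) (n + 1) * (-a) ^ (n + 1)) + 1 := by
      rw [Finset.sum_range_succ']
      simp [cG_zero hq]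
    have e6 : ∑ n ∈ Finset.range (N + 1), cG q (N + 1) (n + 1) * (-a) ^ (n + 1)
        = (∑ n ∈ Finset.range N, cG q (N + 1) (n + 1) * (-a) ^ (n + 1))
          + cG q (N + 1) (N + 1) * (-a) ^ (N + 1) := Finset.sum_range_succ _ N
    have e7 : ∑ n ∈ Finset.range N, cG q (N + 1) (n + 1) * (-a) ^ (n + 1)
        = (∑ n ∈ Finset.range N, cG q N (n + 1) * (-a) ^ (n + 1))
          + ∑ n ∈ Finset.range N, q ^ N * cG q N n * (-a) ^ (n + 1) := by
      rw [← Finset.sum_add_distrib]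
      exact Finset.sum_congr rfl fun i hi => by rw [hmid i hi]; ring
    linear_combination e1 + e2 + e3 + e4 - e5 - e6 - e7 - (-a) ^ (N + 1) * htop

/-- Term ratio of the q-binomial series. -/
noncomputable def gA (c q : ℂ) (m : ℕ) : ℂ := qPochN c q m / qPochN q q m

/-- The q-binomial series `∑ (c;q)_m/(q;q)_m z^m`. -/
noncomputable def gbs (c q z : ℂ) : ℂ := ∑' m : ℕ, gA c q m * z ^ m

lemma norm_gA_le (c q : ℂ) (hq : ‖q‖ < 1) :
    ∃ C : ℝ, 0 ≤ C ∧ ∀ m, ‖gA c q m‖ ≤ C := by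
  refine ⟨Real.exp (‖c‖ * (1 - ‖q‖)⁻¹) * (Real.exp (-(‖q‖ * (1 - ‖q‖)⁻¹ * (1 - ‖q‖)⁻¹)))⁻¹,
    by positivity, fun m => ?_⟩
  rw [gA, norm_div, div_eq_mul_inv]
  have h1 := qPochN_norm_le c q hq m
  have h2 := qPochN_norm_ge q q hq hq m
  have hpos : (0:ℝ) < Real.exp (-(‖q‖ * (1 - ‖q‖)⁻¹ * (1 - ‖q‖)⁻¹)) := Real.exp_pos _
  have hinv : ‖qPochN q q m‖⁻¹ ≤ (Real.exp (-(‖q‖ * (1 - ‖q‖)⁻¹ * (1 - ‖q‖)⁻¹)))⁻¹ :=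
    inv_anti₀ hpos h2
  have hn : (0:ℝ) ≤ ‖qPochN q q m‖⁻¹ := by positivity
  exact mul_le_mul h1 hinv hn (Real.exp_pos _).le

lemma summable_gbs (c q z : ℂ) (hq : ‖q‖ < 1) (hz : ‖z‖ < 1) :
    Summable (fun m : ℕ => gA c q m * z ^ m) := by
  obtain ⟨C, hC0, hC⟩ := norm_gA_le c q hq
  refine Summable.of_norm_bounded
    ((summable_geometric_of_lt_one (norm_nonneg z) hz).mul_left C) (fun m => ?_)
  rw [norm_mul, norm_pow]
  exact mul_le_mul_of_nonneg_right (hC m) (by positivity)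

lemma gA_rec {c q : ℂ} (hq : ‖q‖ < 1) (m : ℕ) :
    gA c q (m + 1) * (1 - q * q ^ m) = gA c q m * (1 - c * q ^ m) := by
  have h1 := qPochN_ne_zero (x := q) hq hq m
  have h2 := one_sub_ne_zero (x := q) hq hq m
  rw [gA, gA, qPochN_succ, qPochN_succ]
  rw [div_mul_eq_mul_div, mul_div_mul_right _ _ h2]
  ring

lemma norm_q_mul_lt {q w : ℂ} (hq : ‖q‖ < 1) (hw : ‖w‖ < 1) : ‖q * w‖ < 1 := by
  rw [norm_mul]
  nlinarith [norm_nonneg q, norm_nonneg w]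

set_option maxHeartbeats 1000000 in
lemma gbs_funeq (c q z : ℂ) (hq : ‖q‖ < 1) (hz : ‖z‖ < 1) :
    (1 - z) * gbs c q z = (1 - c * z) * gbs c q (q * z) := by
  have hqz : ‖q * z‖ < 1 := norm_q_mul_lt hq hz
  have hs := summable_gbs c q z hq hz
  have hs' := summable_gbs c q (q * z) hq hqz
  have hE : Summable (fun m : ℕ => gA c q m * (1 - q ^ m) * z ^ m) := by
    have heq : (fun m : ℕ => gA c q m * (1 - q ^ m) * z ^ m)
        = fun m => gA c q m * z ^ m - gA c q m * (q * z) ^ m := funext fun m => by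
      rw [mul_pow]; ring
    rw [heq]; exact hs.sub hs'
  have hEs : Summable (fun m : ℕ => gA c q (m + 1) * (1 - q ^ (m + 1)) * z ^ (m + 1)) :=
    (summable_nat_add_iff 1).2 hE
  have hL : (1 - z) * gbs c q z = ∑' m : ℕ, (1 - z) * (gA c q m * z ^ m) := tsum_mul_left.symm
  have hR : (1 - c * z) * gbs c q (q * z)
      = ∑' m : ℕ, (1 - c * z) * (gA c q m * (q * z) ^ m) := tsum_mul_left.symm
  rw [hL, hR, ← sub_eq_zero, ← Summable.tsum_sub (hs.mul_left _) (hs'.mul_left _)]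
  have key : ∀ m : ℕ, (1 - z) * (gA c q m * z ^ m) - (1 - c * z) * (gA c q m * (q * z) ^ m)
      = gA c q m * (1 - q ^ m) * z ^ m - gA c q (m + 1) * (1 - q ^ (m + 1)) * z ^ (m + 1) := by
    intro m
    have h := gA_rec (c := c) hq m
    linear_combination (z ^ (m + 1)) * h
  rw [tsum_congr key, Summable.tsum_sub hE hEs]
  have h0 : ∑' m : ℕ, gA c q (m + 1) * (1 - q ^ (m + 1)) * z ^ (m + 1)
      = ∑' m : ℕ, gA c q m * (1 - q ^ m) * z ^ m := by
    rw [Summable.tsum_eq_zero_add hE]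
    simp
  rw [h0, sub_self]

lemma gbs_iter (c q z : ℂ) (hq : ‖q‖ < 1) (hz : ‖z‖ < 1) (k : ℕ) :
    qPochN z q k * gbs c q z = qPochN (c * z) q k * gbs c q (q ^ k * z) := by
  induction k with
  | zero => simp [qPochN_zero]
  | succ k ih =>
    have hzk : ‖q ^ k * z‖ < 1 := by
      rw [norm_mul, norm_pow]
      have h1 : ‖q‖ ^ k ≤ 1 := pow_le_one₀ (norm_nonneg q) hq.le
      nlinarith [norm_nonneg z, pow_nonneg (norm_nonneg q) k]
    have h := gbs_funeq c q (q ^ k * z) hq hzk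
    calc qPochN z q (k + 1) * gbs c q z
        = (1 - z * q ^ k) * (qPochN z q k * gbs c q z) := by rw [qPochN_succ]; ring
      _ = (1 - z * q ^ k) * (qPochN (c * z) q k * gbs c q (q ^ k * z)) := by rw [ih]
      _ = qPochN (c * z) q k * ((1 - q ^ k * z) * gbs c q (q ^ k * z)) := by ring
      _ = qPochN (c * z) q k * ((1 - c * (q ^ k * z)) * gbs c q (q * (q ^ k * z))) := by rw [h]
      _ = qPochN (c * z) q (k + 1) * gbs c q (q ^ (k + 1) * z) := by
          rw [qPochN_succ, show q * (q ^ k * z) = q ^ (k + 1) * z from by ring]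
          ring

lemma gbs_tendsto_one (c q z : ℂ) (hq : ‖q‖ < 1) (hz : ‖z‖ < 1) :
    Filter.Tendsto (fun k : ℕ => gbs c q (q ^ k * z)) atTop (𝓝 1) := by
  obtain ⟨C, hC0, hC⟩ := norm_gA_le c q hq
  have hbound : ∀ w : ℂ, ‖w‖ ≤ ‖z‖ → ‖gbs c q w - 1‖ ≤ C * (1 - ‖z‖)⁻¹ * ‖w‖ := by
    intro w hw
    have hw1 : ‖w‖ < 1 := lt_of_le_of_lt hw hz
    have hsw := summable_gbs c q w hq hw1
    have h1 : gbs c q w - 1 = ∑' m : ℕ, gA c q (m + 1) * w ^ (m + 1) := by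
      rw [gbs, Summable.tsum_eq_zero_add hsw]
      simp [gA, qPochN_zero]
    rw [h1]
    have hgeo : Summable (fun m : ℕ => C * ‖z‖ ^ m * ‖w‖) :=
      ((summable_geometric_of_lt_one (norm_nonneg z) hz).mul_left C).mul_right _
    have hterm : ∀ m : ℕ, ‖gA c q (m + 1) * w ^ (m + 1)‖ ≤ C * ‖z‖ ^ m * ‖w‖ := by
      intro m
      rw [norm_mul, norm_pow, pow_succ]
      have h2 : ‖w‖ ^ m ≤ ‖z‖ ^ m := pow_le_pow_left₀ (norm_nonneg w) hw m
      have h3 : ‖gA c q (m + 1)‖ * (‖w‖ ^ m * ‖w‖) ≤ C * (‖z‖ ^ m * ‖w‖) := by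
        have := hC (m + 1)
        have h4 : ‖w‖ ^ m * ‖w‖ ≤ ‖z‖ ^ m * ‖w‖ :=
          mul_le_mul_of_nonneg_right h2 (norm_nonneg w)
        have h5 : (0:ℝ) ≤ ‖w‖ ^ m * ‖w‖ := by positivity
        nlinarith [norm_nonneg (gA c q (m+1))]
      linarith [h3]
    have := (norm_tsum_le_tsum_norm (Summable.of_nonneg_of_le (fun m => norm_nonneg _)
      hterm hgeo)).trans (Summable.tsum_le_tsum hterm (Summable.of_nonneg_of_le
        (fun m => norm_nonneg _) hterm hgeo) hgeo)
    refine this.trans ?_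
    rw [tsum_mul_right, tsum_mul_left, tsum_geometric_of_lt_one (norm_nonneg z) hz]
  have hle : ∀ k : ℕ, ‖q ^ k * z‖ ≤ ‖z‖ := by
    intro k
    rw [norm_mul, norm_pow]
    have h1 : ‖q‖ ^ k ≤ 1 := pow_le_one₀ (norm_nonneg q) hq.le
    nlinarith [norm_nonneg z, pow_nonneg (norm_nonneg q) k]
  have hnorm : Filter.Tendsto (fun k : ℕ => ‖gbs c q (q ^ k * z) - 1‖) atTop (𝓝 0) := by
    apply squeeze_zero (fun k => norm_nonneg _) (fun k => hbound (q ^ k * z) (hle k))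
    have h6 : Filter.Tendsto (fun k : ℕ => C * (1 - ‖z‖)⁻¹ * (‖q‖ ^ k * ‖z‖)) atTop
        (𝓝 (C * (1 - ‖z‖)⁻¹ * (0 * ‖z‖))) :=
      (((tendsto_pow_atTop_nhds_zero_of_lt_one (norm_nonneg q) hq).mul_const
        ‖z‖).const_mul _)
    simp only [zero_mul, mul_zero] at h6
    convert h6 using 2 with k
    rw [norm_mul, norm_pow]
  rw [show (1 : ℂ) = 1 from rfl]
  have := tendsto_iff_norm_sub_tendsto_zero.2 hnorm
  exact this

lemma qbinomial {c q z : ℂ} (hq : ‖q‖ < 1) (hz : ‖z‖ < 1) (hcz : ‖c * z‖ < 1) :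
    gbs c q z = qPochInf (c * z) q / qPochInf z q := by
  have h1 : Filter.Tendsto (fun k : ℕ => qPochN z q k * gbs c q z) atTop
      (𝓝 (qPochInf z q * gbs c q z)) := (qPochN_tendsto hz hq).mul_const _
  have h2 : Filter.Tendsto (fun k : ℕ => qPochN (c * z) q k * gbs c q (q ^ k * z)) atTop
      (𝓝 (qPochInf (c * z) q * 1)) :=
    (qPochN_tendsto hcz hq).mul (gbs_tendsto_one c q z hq hz)
  have h3 : (fun k : ℕ => qPochN z q k * gbs c q z)
      = fun k => qPochN (c * z) q k * gbs c q (q ^ k * z) :=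
    funext fun k => gbs_iter c q z hq hz k
  rw [h3] at h1
  have h4 := tendsto_nhds_unique h1 h2
  rw [mul_one] at h4
  rw [eq_div_iff (qPochInf_ne_zero hz hq), mul_comm]
  exact h4

lemma summable_qexp {q : ℂ} (hq : ‖q‖ < 1) (w : ℂ) :
    Summable (fun n : ℕ => ‖q‖ ^ (n * (n - 1) / 2) * ‖w‖ ^ n) := by
  apply summable_of_ratio_norm_eventually_le (r := 1/2) (by norm_num)
  have htend : Filter.Tendsto (fun n : ℕ => ‖q‖ ^ n * ‖w‖) atTop (𝓝 (0 * ‖w‖)) :=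
    (tendsto_pow_atTop_nhds_zero_of_lt_one (norm_nonneg q) hq).mul_const _
  rw [zero_mul] at htend
  have hev : ∀ᶠ n : ℕ in atTop, ‖q‖ ^ n * ‖w‖ ≤ 1/2 := by
    have := htend.eventually (eventually_le_nhds (show (0:ℝ) < 1/2 by norm_num))
    exact this
  filter_upwards [hev] with n hn
  rw [Real.norm_of_nonneg (by positivity), Real.norm_of_nonneg (by positivity),
    Nat.add_sub_cancel, Tsucc, pow_add, pow_succ]
  calc ‖q‖ ^ (n * (n - 1) / 2) * ‖q‖ ^ n * (‖w‖ ^ n * ‖w‖)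
      = (‖q‖ ^ n * ‖w‖) * (‖q‖ ^ (n * (n - 1) / 2) * ‖w‖ ^ n) := by ring
    _ ≤ 1/2 * (‖q‖ ^ (n * (n - 1) / 2) * ‖w‖ ^ n) :=
        mul_le_mul_of_nonneg_right hn (by positivity)

lemma tsum_antidiag (F : ℕ × ℕ → ℂ) (h : Summable F) :
    ∑' N : ℕ, ∑ kl ∈ Finset.HasAntidiagonal.antidiagonal N, F kl = ∑' p : ℕ × ℕ, F p := by
  conv_lhs => congr; ext; rw [← Finset.sum_finset_coe, ← tsum_fintype (L := SummationFilter.unconditional _)]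
  rw [← Finset.HasAntidiagonal.sigmaAntidiagonalEquivProd.tsum_eq F]
  exact (Summable.tsum_sigma' (fun n => (hasSum_fintype _).summable)
    (Finset.HasAntidiagonal.sigmaAntidiagonalEquivProd.summable_iff.2 h)).symm

end HeineAux

set_option maxHeartbeats 4000000 in
open HeineAux Finset Filter Topology in
/-- Heine's transformation:
`₂φ₁(a,b;0;q,z) = (bz;q)_∞ / (z;q)_∞ · ₁φ₁(b;bz;q,az)` for `|q| < 1`, `|z| < 1`, `|bz| < 1`. -/
theorem heine_2phi1_c_zero_eq_1phi1 (a b q z : ℂ) (hq : ‖q‖ < 1) (hz : ‖z‖ < 1)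
    (hbz : ‖b * z‖ < 1) :
    phi21 a b 0 q z = qPochInf (b * z) q / qPochInf z q * phi11 b (b * z) q (a * z) := by
  set F : ℕ × ℕ → ℂ := fun p =>
    qPochN b q (p.1 + p.2) / (qPochN q q p.1 * qPochN q q p.2) * (-a) ^ p.1
      * q ^ (p.1 * (p.1 - 1) / 2) * z ^ (p.1 + p.2) with hFdef
  set Eb := Real.exp (‖b‖ * (1 - ‖q‖)⁻¹) with hEb
  set eq0 := Real.exp (-(‖q‖ * (1 - ‖q‖)⁻¹ * (1 - ‖q‖)⁻¹)) with heq0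
  have heqpos : (0:ℝ) < eq0 := Real.exp_pos _
  have hF : Summable F := by
    have hG : Summable (fun p : ℕ × ℕ =>
        (Eb * eq0⁻¹ * eq0⁻¹ * (‖q‖ ^ (p.1 * (p.1 - 1) / 2) * ‖a * z‖ ^ p.1)) * ‖z‖ ^ p.2) :=
      Summable.mul_of_nonneg ((summable_qexp hq (a * z)).mul_left _)
        (summable_geometric_of_lt_one (norm_nonneg z) hz)
        (fun n => by positivity) (fun m => by positivity)
    refine Summable.of_norm_bounded hG (fun p => ?_)
    have heqn : ‖F p‖ = ‖qPochN b q (p.1 + p.2)‖ * ‖qPochN q q p.1‖⁻¹ * ‖qPochN q q p.2‖⁻¹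
        * (‖q‖ ^ (p.1 * (p.1 - 1) / 2) * (‖a‖ * ‖z‖) ^ p.1) * ‖z‖ ^ p.2 := by
      simp only [hFdef, norm_mul, norm_div, norm_pow, norm_neg, pow_add, mul_pow]
      ring
    rw [heqn, norm_mul]
    have h1 : ‖qPochN b q (p.1 + p.2)‖ ≤ Eb := qPochN_norm_le b q hq _
    have h2 : ‖qPochN q q p.1‖⁻¹ ≤ eq0⁻¹ := by
      apply inv_anti₀ heqpos (qPochN_norm_ge q q hq hq _)
    have h3 : ‖qPochN q q p.2‖⁻¹ ≤ eq0⁻¹ := by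
      apply inv_anti₀ heqpos (qPochN_norm_ge q q hq hq _)
    gcongr
  -- step 1: expand phi21 into the double family `F` summed along antidiagonals
  have hstep1 : phi21 a b 0 q z = ∑' N : ℕ, ∑ kl ∈ Finset.HasAntidiagonal.antidiagonal N, F kl := by
    rw [phi21]
    refine tsum_congr fun N => ?_
    rw [Finset.Nat.sum_antidiagonal_eq_sum_range_succ_mk, qPochN_zero_left, one_mul,
      gauss hq a N, Finset.sum_mul, Finset.sum_div, Finset.sum_mul]
    refine Finset.sum_congr rfl fun n hn => ?_
    have hn' : n ≤ N := by have := Finset.mem_range.1 hn; omega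
    simp only [hFdef]
    rw [show n + (N - n) = N from by omega]
    unfold cG
    have hqN := qPochN_ne_zero (x := q) hq hq N
    have hqn := qPochN_ne_zero (x := q) hq hq n
    have hqNn := qPochN_ne_zero (x := q) hq hq (N - n)
    field_simp
  -- step 2 and 3
  have hstep2 : ∑' N : ℕ, ∑ kl ∈ Finset.HasAntidiagonal.antidiagonal N, F kl = ∑' p : ℕ × ℕ, F p :=
    tsum_antidiag F hF
  have hstep3 : ∑' p : ℕ × ℕ, F p = ∑' n : ℕ, ∑' m : ℕ, F (n, m) :=
    Summable.tsum_prod' hF (fun n => hF.prod_factor n)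
  -- inner sum evaluation
  have hinner : ∀ n : ℕ,
      ∑' m : ℕ, F (n, m) = (qPochN b q n * (-a) ^ n * q ^ (n * (n - 1) / 2) * z ^ n
        / qPochN q q n) * (qPochInf (b * z) q / (qPochN (b * z) q n * qPochInf z q)) := by
    intro n
    have hqn := qPochN_ne_zero (x := q) hq hq n
    have hterm : ∀ m : ℕ, F (n, m)
        = (qPochN b q n * (-a) ^ n * q ^ (n * (n - 1) / 2) * z ^ n / qPochN q q n)
          * (gA (b * q ^ n) q m * z ^ m) := by
      intro m
      simp only [hFdef, gA]
      rw [qPochN_add, pow_add]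
      have hqm := qPochN_ne_zero (x := q) hq hq m
      field_simp
    rw [tsum_congr hterm, tsum_mul_left]
    have hcz : ‖b * q ^ n * z‖ < 1 := by
      rw [show b * q ^ n * z = b * z * q ^ n from by ring]
      exact norm_mul_pow_le hbz hq n
    have hgbs : ∑' m : ℕ, gA (b * q ^ n) q m * z ^ m = gbs (b * q ^ n) q z := rfl
    rw [hgbs, qbinomial hq hz hcz]
    have hsplit := qPochInf_split hbz hq n
    have hPn := qPochN_ne_zero hbz hq n
    have htail : qPochInf (b * q ^ n * z) q = qPochInf (b * z) q / qPochN (b * z) q n := by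
      rw [show b * q ^ n * z = b * z * q ^ n from by ring, eq_div_iff hPn, mul_comm]
      exact hsplit.symm
    rw [htail, div_div]
  -- right-hand side expansion
  have hRHS : qPochInf (b * z) q / qPochInf z q * phi11 b (b * z) q (a * z)
      = ∑' n : ℕ, qPochInf (b * z) q / qPochInf z q
        * (qPochN b q n / (qPochN (b * z) q n * qPochN q q n) * (-1) ^ n
          * q ^ (n * (n - 1) / 2) * (a * z) ^ n) := by
    rw [phi11, tsum_mul_left]
  rw [hstep1, hstep2, hstep3, hRHS]
  refine tsum_congr fun n => ?_
  rw [hinner n]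
  have hqn := qPochN_ne_zero (x := q) hq hq n
  have hPn := qPochN_ne_zero hbz hq n
  have hInf := qPochInf_ne_zero hz hq
  rw [neg_pow, mul_pow]
  field_simp
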